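/- Let Δ, Δ¹, ..., Δᵏ be k+1 exchangeable (i.i.d.) real-valued random variables. Define Δ^(k+1) := ∞ and let Δ^(1) ≤ ... ≤ Δ^(k) be the order statistics of Δ¹,...,Δᵏ. For α ∈ (0,1), let r = ⌈(k+1)(1-α)⌉ and Δ̄ := Δ^(r). Then P(Δ ≤ Δ̄) ≥ 1 - α. -/

import Mathlib

open MeasureTheory ProbabilityTheory Finset
open scoped ENNReal NNReal

/-- The `r`-th smallest value (1-indexed) among the values `v i`, `i : Fin k`. -/
noncomputable def orderStat {k : ℕ} (v : Fin k → ℝ) (r : ℕ) : ℝ :=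
  ((Multiset.map v Finset.univ.val).sort (· ≤ ·)).getD (r - 1) 0


/-- number of coordinates strictly below `x j` -/
noncomputable def rankLT {n : ℕ} (x : Fin n → ℝ) (j : Fin n) : ℕ :=
  (Finset.univ.filter (fun i => x i < x j)).card

lemma card_filter_val_lt {n m : ℕ} (hm : m ≤ n) :
    (Finset.univ.filter (fun p : Fin n => (p : ℕ) < m)).card = m := by
  classical
  have : (Finset.univ.filter (fun p : Fin n => (p : ℕ) < m)) =
      Finset.univ.image (Fin.castLE hm) := by
    ext p
    simp only [mem_filter, mem_univ, true_and, mem_image]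
    constructor
    · intro hp
      exact ⟨⟨p, hp⟩, rfl⟩
    · rintro ⟨q, -, rfl⟩
      exact q.isLt
  rw [this, Finset.card_image_of_injective _ (Fin.castLE_injective hm)]
  simp

lemma card_filter_comp_perm {n : ℕ} (e : Equiv.Perm (Fin n)) (p : Fin n → Prop)
    [DecidablePred p] :
    (Finset.univ.filter (fun i => p (e i))).card = (Finset.univ.filter p).card := by
  classical
  rw [Finset.card_filter, Finset.card_filter]
  exact Equiv.sum_comp e (fun i => if p i then 1 else 0)

lemma rankLT_comp_perm {n : ℕ} (x : Fin n → ℝ) (e : Equiv.Perm (Fin n)) (j : Fin n) :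
    rankLT (x ∘ e) j = rankLT x (e j) := by
  classical
  unfold rankLT
  exact card_filter_comp_perm e (fun i => x i < x (e j))

/-- at least `r` indices have rank `< r` -/
lemma card_rankLT_lt {n r : ℕ} (x : Fin n → ℝ) (hr : r ≤ n) :
    r ≤ (Finset.univ.filter (fun j => rankLT x j < r)).card := by
  classical
  set σ := Tuple.sort x with hσ
  have hmono : Monotone (x ∘ σ) := Tuple.monotone_sort x
  have hsub : (Finset.univ.filter (fun p : Fin n => (p : ℕ) < r)).image σ ⊆
      Finset.univ.filter (fun j => rankLT x j < r) := by
    intro j hj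
    simp only [mem_image, mem_filter, mem_univ, true_and] at hj ⊢
    obtain ⟨p, hp, rfl⟩ := hj
    -- rankLT x (σ p) ≤ p < r
    have h1 : rankLT x (σ p) = (Finset.univ.filter (fun q => x (σ q) < x (σ p))).card :=
      (card_filter_comp_perm σ (fun i => x i < x (σ p))).symm
    have h2 : (Finset.univ.filter (fun q => x (σ q) < x (σ p))) ⊆
        (Finset.univ.filter (fun q : Fin n => (q : ℕ) < (p : ℕ))) := by
      intro q hq
      simp only [mem_filter, mem_univ, true_and] at hq ⊢
      by_contra h
      push_neg at h
      have : p ≤ q := by exact_mod_cast h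
      exact absurd (hmono this) (not_le.2 hq)
    have h3 := Finset.card_le_card h2
    rw [card_filter_val_lt (le_of_lt p.isLt)] at h3
    omega
  have hcard : ((Finset.univ.filter (fun p : Fin n => (p : ℕ) < r)).image σ).card = r := by
    rw [Finset.card_image_of_injective _ σ.injective, card_filter_val_lt hr]
  calc r = _ := hcard.symm
    _ ≤ _ := Finset.card_le_card hsub


lemma le_orderStat {k r : ℕ} (v : Fin k → ℝ) (t : ℝ) (h1 : 1 ≤ r) (h2 : r ≤ k)
    (hc : (Finset.univ.filter (fun i => v i < t)).card < r) : t ≤ orderStat v r := by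
  classical
  set l := ((Multiset.map v Finset.univ.val).sort (· ≤ ·)) with hl
  have hlen : l.length = k := by
    rw [hl, Multiset.length_sort, Multiset.card_map]
    simp
  have hsorted : l.Pairwise (· ≤ ·) := Multiset.pairwise_sort _ _
  -- count of elements < t in l equals the filter card
  have hcount : l.countP (fun a => decide (a < t)) =
      (Finset.univ.filter (fun i => v i < t)).card := by
    have : l.countP (fun a => decide (a < t)) =
        Multiset.countP (fun a => a < t) (Multiset.map v Finset.univ.val) := by
      rw [hl]
      rw [← Multiset.coe_countP]
      congr 1
      exact Multiset.sort_eq _ _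
    rw [this, Multiset.countP_map]
    rfl
  by_contra hlt
  push_neg at hlt
  -- all of the first r elements are < t
  have hr1 : r - 1 < l.length := by omega
  have hall : ∀ a ∈ l.take r, a < t := by
    intro a ha
    rw [List.mem_take_iff_getElem] at ha
    obtain ⟨i, hi, rfl⟩ := ha
    have hil : i < l.length := by
      have := lt_min_iff.mp hi
      exact this.2
    have hile : i ≤ r - 1 := by
      have := lt_min_iff.mp hi
      omega
    have : l[i] ≤ l[r-1] := by
      rcases eq_or_lt_of_le hile with h | h
      · subst h; rfl
      · exact List.pairwise_iff_getElem.mp hsorted i (r-1) hil hr1 h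
    calc l[i] ≤ l[r-1] := this
      _ = l.getD (r-1) 0 := (List.getD_eq_getElem l 0 hr1).symm
      _ < t := hlt
  have htake : (l.take r).countP (fun a => decide (a < t)) = r := by
    rw [List.countP_eq_length.mpr (fun a ha => decide_eq_true (hall a ha))]
    rw [List.length_take, hlen]
    omega
  have hle : (l.take r).countP (fun a => decide (a < t)) ≤
      l.countP (fun a => decide (a < t)) := (List.take_sublist r l).countP_le
  omega

lemma measurable_rankLT {n : ℕ} (j : Fin n) :
    Measurable (fun x : Fin n → ℝ => rankLT x j) := by
  classical
  unfold rankLT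
  simp_rw [Finset.card_filter]
  apply Finset.measurable_sum
  intro i _
  apply Measurable.ite _ measurable_const measurable_const
  exact measurableSet_lt (measurable_pi_apply i) (measurable_pi_apply j)

lemma pi_map_comp_perm {n : ℕ} (μ : Measure ℝ) [IsProbabilityMeasure μ]
    (e : Equiv.Perm (Fin n)) :
    (Measure.pi fun _ : Fin n => μ).map (fun x => x ∘ e) = Measure.pi (fun _ => μ) := by
  have hm : Measurable (fun x : Fin n → ℝ => x ∘ e) :=
    measurable_pi_lambda _ fun i => measurable_pi_apply _
  refine (Measure.pi_eq fun s hs => ?_).symm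
  rw [Measure.map_apply hm (MeasurableSet.univ_pi hs)]
  have hpre : (fun x : Fin n → ℝ => x ∘ e) ⁻¹' Set.pi Set.univ s =
      Set.pi Set.univ (fun i => s (e.symm i)) := by
    ext x
    simp only [Set.mem_preimage, Set.mem_pi, Set.mem_univ, true_implies, Function.comp]
    constructor
    · intro h i
      simpa using h (e.symm i)
    · intro h i
      simpa using h (e i)
  rw [hpre, Measure.pi_pi]
  exact Equiv.prod_comp e.symm (fun i => μ (s i))

lemma card_filter_castSucc {k : ℕ} (Q : Fin (k+1) → Prop) [DecidablePred Q]
    (h : ¬ Q (Fin.last k)) :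
    (Finset.univ.filter (fun i : Fin k => Q i.castSucc)).card =
    (Finset.univ.filter Q).card := by
  rw [Finset.card_filter, Finset.card_filter, Fin.sum_univ_castSucc]
  simp [h]


/-- Basic conformal prediction guarantee: for `k+1` i.i.d. real random variables
`X 0, …, X k`, where `Δ := X (Fin.last k)` is the fresh score and the first `k`
are calibration scores, the `r`-th order statistic (with `∞` appended as the
`(k+1)`-st value) with `r = ⌈(k+1)(1-α)⌉` upper-bounds `Δ` with probability `≥ 1 - α`. -/
theorem conformal_prediction_coverage
    {Ω : Type*} [MeasurableSpace Ω] (P : Measure Ω) [IsProbabilityMeasure P]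
    (k : ℕ) (X : Fin (k + 1) → Ω → ℝ)
    (hmeas : ∀ i, Measurable (X i))
    (hindep : iIndepFun X P)
    (hident : ∀ i j, IdentDistrib (X i) (X j) P P)
    (α : ℝ) (hα : α ∈ Set.Ioo (0 : ℝ) 1)
    (r : ℕ) (hr : r = ⌈((k : ℝ) + 1) * (1 - α)⌉₊)
    (Δbar : Ω → EReal)
    (hΔbar : ∀ ω, Δbar ω =
      if r ≤ k then ((orderStat (fun i : Fin k => X i.castSucc ω) r : ℝ) : EReal)
      else ⊤) :
    ENNReal.ofReal (1 - α) ≤ P {ω | ((X (Fin.last k) ω : ℝ) : EReal) ≤ Δbar ω} := by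
  classical
  obtain ⟨hα0, hα1⟩ := hα
  have hr1 : 1 ≤ r := by
    rw [hr]
    have hpos : (0:ℝ) < ((k:ℝ)+1) * (1-α) := by
      apply mul_pos <;> [positivity; linarith]
    exact Nat.ceil_pos.mpr hpos
  have hrk1 : ((k:ℝ)+1) * (1-α) ≤ (r:ℝ) := hr ▸ Nat.le_ceil _
  by_cases hrk : r ≤ k
  swap
  · have huniv : {ω | ((X (Fin.last k) ω : ℝ) : EReal) ≤ Δbar ω} = Set.univ := by
      ext ω
      simp [hΔbar ω, hrk]
    rw [huniv, measure_univ]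
    exact ENNReal.ofReal_le_one.mpr (by linarith)
  · set μ := P.map (X (Fin.last k)) with hμ
    have hprobμ : IsProbabilityMeasure μ := Measure.isProbabilityMeasure_map (hmeas _).aemeasurable
    set π := Measure.pi (fun _ : Fin (k+1) => μ) with hπ
    have hprobπ : IsProbabilityMeasure π := by infer_instance
    set V : Ω → (Fin (k+1) → ℝ) := fun ω i => X i ω with hVdef
    have hV : Measurable V := measurable_pi_lambda _ hmeas
    have hmap : P.map V = π := by
      refine (Measure.pi_eq fun s hs => ?_).symm
      rw [Measure.map_apply hV (MeasurableSet.univ_pi hs)]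
      have hpre : V ⁻¹' Set.pi Set.univ s = ⋂ i, X i ⁻¹' s i := by
        ext ω; simp [hVdef, Set.mem_pi]
      rw [hpre, hindep.meas_iInter (fun i => ⟨s i, hs i, rfl⟩)]
      refine Finset.prod_congr rfl fun i _ => ?_
      have hmi : P.map (X i) = μ := (hident i (Fin.last k)).map_eq
      rw [← hmi, Measure.map_apply (hmeas i) (hs i)]
    set B : Fin (k+1) → Set (Fin (k+1) → ℝ) := fun j => {x | rankLT x j < r} with hBdef
    have hB : ∀ j, MeasurableSet (B j) := fun j =>
      measurableSet_lt (measurable_rankLT j) measurable_const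
    have hBeq : ∀ j, π (B j) = π (B (Fin.last k)) := by
      intro j
      set e := Equiv.swap j (Fin.last k) with he
      have hm : Measurable (fun x : Fin (k+1) → ℝ => x ∘ e) :=
        measurable_pi_lambda _ fun i => measurable_pi_apply _
      have hpre : (fun x : Fin (k+1) → ℝ => x ∘ e) ⁻¹' B (Fin.last k) = B j := by
        ext x
        simp only [Set.mem_preimage, hBdef, Set.mem_setOf_eq]
        rw [rankLT_comp_perm, he, Equiv.swap_apply_right]
      rw [← hpre, ← Measure.map_apply hm (hB _), hπ, pi_map_comp_perm]
    have hsum : (r : ℝ≥0∞) ≤ ∑ j, π (B j) := by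
      have hind : ∀ j, Measurable (Set.indicator (B j) (fun _ => (1:ℝ≥0∞))) :=
        fun j => measurable_const.indicator (hB j)
      calc (r:ℝ≥0∞) = ∫⁻ _, (r:ℝ≥0∞) ∂π := by
            rw [lintegral_const, measure_univ, mul_one]
        _ ≤ ∫⁻ x, ∑ j, Set.indicator (B j) (fun _ => (1:ℝ≥0∞)) x ∂π := by
            apply lintegral_mono
            intro x
            have hcard : ∑ j, Set.indicator (B j) (fun _ => (1:ℝ≥0∞)) x
                = ((Finset.univ.filter (fun j => rankLT x j < r)).card : ℝ≥0∞) := by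
              rw [Finset.card_filter]
              push_cast
              refine Finset.sum_congr rfl fun j _ => ?_
              by_cases hx : rankLT x j < r
              · simp [Set.indicator, hBdef, hx]
              · simp [Set.indicator, hBdef, hx]
            show (r:ℝ≥0∞) ≤ ∑ j, Set.indicator (B j) (fun _ => (1:ℝ≥0∞)) x
            rw [hcard]
            exact_mod_cast Nat.cast_le.mpr (card_rankLT_lt x (by omega))
        _ = ∑ j, π (B j) := by
            rw [lintegral_finset_sum _ fun j _ => hind j]
            exact Finset.sum_congr rfl fun j _ => lintegral_indicator_one (hB j)
    have hsum' : (r : ℝ≥0∞) ≤ ((k:ℝ≥0∞)+1) * π (B (Fin.last k)) := by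
      calc (r:ℝ≥0∞) ≤ ∑ j, π (B j) := hsum
        _ = ((k:ℝ≥0∞)+1) * π (B (Fin.last k)) := by
            rw [Finset.sum_congr rfl fun j _ => hBeq j, Finset.sum_const,
              Finset.card_univ, Fintype.card_fin, nsmul_eq_mul]
            push_cast
            ring
    have hπB : ENNReal.ofReal (1 - α) ≤ π (B (Fin.last k)) := by
      have hne : ((k:ℝ≥0∞)+1) ≠ 0 := by simp
      have htop : ((k:ℝ≥0∞)+1) ≠ ⊤ := by
        simp [ENNReal.add_eq_top]
      rw [← ENNReal.mul_le_mul_iff_right hne htop]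
      calc ((k:ℝ≥0∞)+1) * ENNReal.ofReal (1-α)
          = ENNReal.ofReal (((k:ℝ)+1) * (1-α)) := by
            rw [ENNReal.ofReal_mul (by positivity)]
            congr 1
            rw [ENNReal.ofReal_add (by positivity) zero_le_one]
            simp [ENNReal.ofReal_natCast]
        _ ≤ (r : ℝ≥0∞) := by
            calc ENNReal.ofReal (((k:ℝ)+1) * (1-α)) ≤ ENNReal.ofReal (r:ℝ) :=
                  ENNReal.ofReal_le_ofReal hrk1
              _ = (r : ℝ≥0∞) := ENNReal.ofReal_natCast r
        _ ≤ ((k:ℝ≥0∞)+1) * π (B (Fin.last k)) := hsum'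
    have hsub : V ⁻¹' B (Fin.last k) ⊆
        {ω | ((X (Fin.last k) ω : ℝ) : EReal) ≤ Δbar ω} := by
      intro ω hω
      simp only [Set.mem_preimage, hBdef, Set.mem_setOf_eq] at hω
      rw [Set.mem_setOf_eq, hΔbar ω, if_pos hrk, EReal.coe_le_coe_iff]
      apply le_orderStat _ _ hr1 hrk
      have := card_filter_castSucc (fun j : Fin (k+1) => X j ω < X (Fin.last k) ω)
        (lt_irrefl _)
      rw [this]
      exact hω
    calc ENNReal.ofReal (1-α) ≤ π (B (Fin.last k)) := hπB
      _ = (P.map V) (B (Fin.last k)) := by rw [hmap]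
      _ = P (V ⁻¹' B (Fin.last k)) := Measure.map_apply hV (hB _)
      _ ≤ _ := measure_mono hsub
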